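/- Let G be a finite simple graph with no isolated vertices that is (H1, H2, C6)-free and satisfies γt(G) = 2γ(G), and let S be an S(G)-set. Then the number of minimum dominating sets of G equals the product over v ∈ S of |T(v)|. -/

import Mathlib

open SimpleGraph

namespace TotalDom

variable {V : Type*}

/-- The closed neighborhood `N[v]` of a vertex. -/
def cnbr (G : SimpleGraph V) (v : V) : Set V := insert v (G.neighborSet v)

/-- `S` is a dominating set: every vertex outside `S` has a neighbor in `S`. -/
def IsDomSet (G : SimpleGraph V) (S : Set V) : Prop := ∀ v ∉ S, ∃ u ∈ S, G.Adj u v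

/-- `S` is a total dominating set: every vertex has a neighbor in `S`. -/
def IsTotalDomSet (G : SimpleGraph V) (S : Set V) : Prop := ∀ v : V, ∃ u ∈ S, G.Adj u v

/-- The domination number `γ(G)`. -/
noncomputable def domNum (G : SimpleGraph V) : ℕ :=
  sInf {n | ∃ S : Set V, IsDomSet G S ∧ S.ncard = n}

/-- The total domination number `γₜ(G)`. -/
noncomputable def totalDomNum (G : SimpleGraph V) : ℕ :=
  sInf {n | ∃ S : Set V, IsTotalDomSet G S ∧ S.ncard = n}

/-- A minimum dominating set (γ-set). -/
def IsMinDomSet (G : SimpleGraph V) (S : Set V) : Prop := IsDomSet G S ∧ S.ncard = domNum G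

/-- `S` is a packing: closed neighborhoods of distinct members are disjoint. -/
def IsPacking (G : SimpleGraph V) (S : Set V) : Prop :=
  S.Pairwise fun u v => Disjoint (cnbr G u) (cnbr G v)

/-- `M(v)`: neighbors of `v` having a neighbor outside `N[v]`. -/
def Mset (G : SimpleGraph V) (v : V) : Set V :=
  {u | G.Adj v u ∧ ∃ w, G.Adj u w ∧ w ∉ cnbr G v}

/-- `D(v)`: neighbors `u` of `v` that are not true twins of `v` with `N[u] ⊆ N[v]`. -/
def Dset (G : SimpleGraph V) (v : V) : Set V :=
  {u | G.Adj v u ∧ cnbr G u ≠ cnbr G v ∧ cnbr G u ⊆ cnbr G v}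

/-- `T(v)`: `v` together with its true twins. -/
def Tset (G : SimpleGraph V) (v : V) : Set V := {u | cnbr G u = cnbr G v}

/-- A non-isolated vertex `v` is special if no `u ∈ M(v)` satisfies `D(v) ⊆ N(u)`. -/
def Special (G : SimpleGraph V) (v : V) : Prop :=
  (G.neighborSet v).Nonempty ∧ ¬ ∃ u ∈ Mset G v, Dset G v ⊆ G.neighborSet u

/-- An `S(G)`-set: a set of special vertices containing exactly one vertex from each
true-twin equivalence class of special vertices. -/
def IsSGSet (G : SimpleGraph V) (S : Set V) : Prop :=
  (∀ u ∈ S, Special G u) ∧ ∀ v, Special G v → ∃! u, u ∈ S ∧ u ∈ Tset G v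

/-- `G` has no isolated vertices. -/
def NoIsolated (G : SimpleGraph V) : Prop := ∀ v : V, ∃ u, G.Adj v u

/-- `G` contains no induced copy of `H`. -/
def Free {α : Type*} (H : SimpleGraph α) (G : SimpleGraph V) : Prop := IsEmpty (H ↪g G)

/-- `H₁`: a 6-cycle plus one chord between vertices at distance two along the cycle. -/
def H1 : SimpleGraph (Fin 6) := cycleGraph 6 ⊔ fromEdgeSet {s(0, 2)}

/-- `H₂`: a 6-cycle `x₁x₂x₃x₄x₅x₆` plus the chords `x₂x₆` and `x₃x₅`. -/
def H2 : SimpleGraph (Fin 6) := cycleGraph 6 ⊔ fromEdgeSet {s(1, 5), s(2, 4)}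

/-- A leaf: a vertex of degree one. -/
def IsLeaf (G : SimpleGraph V) (v : V) : Prop := ∃! u, G.Adj v u

/-- A support vertex: a vertex adjacent to a leaf. -/
def IsSupport (G : SimpleGraph V) (v : V) : Prop := ∃ u, G.Adj v u ∧ IsLeaf G u

/-- `sup(G)`: the set of support vertices. -/
def supSet (G : SimpleGraph V) : Set V := {v | IsSupport G v}
set_option linter.unusedSectionVars false

section Basic

variable {G : SimpleGraph V} {D T : Set V} {u v x : V}

lemma mem_cnbr : x ∈ cnbr G v ↔ x = v ∨ G.Adj v x := by
  simp [cnbr]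

lemma self_mem_cnbr (G : SimpleGraph V) (v : V) : v ∈ cnbr G v := mem_cnbr.mpr (Or.inl rfl)

lemma mem_cnbr_of_adj (h : G.Adj v x) : x ∈ cnbr G v := mem_cnbr.mpr (Or.inr h)

lemma cnbr_comm : x ∈ cnbr G v ↔ v ∈ cnbr G x := by
  simp only [mem_cnbr]
  constructor
  · rintro (rfl | h); exact Or.inl rfl; exact Or.inr h.symm
  · rintro (rfl | h); exact Or.inl rfl; exact Or.inr h.symm

lemma adj_of_mem_cnbr (h : x ∈ cnbr G v) (hne : x ≠ v) : G.Adj v x :=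
  (mem_cnbr.mp h).resolve_left hne

lemma not_mem_cnbr (h : x ∉ cnbr G v) : x ≠ v ∧ ¬ G.Adj v x := by
  rw [mem_cnbr] at h; push_neg at h; exact h

lemma IsDomSet.covers (hD : IsDomSet G D) (x : V) : ∃ d ∈ D, x ∈ cnbr G d := by
  by_cases hx : x ∈ D
  · exact ⟨x, hx, self_mem_cnbr G x⟩
  · obtain ⟨u, hu, ha⟩ := hD x hx
    exact ⟨u, hu, mem_cnbr_of_adj ha⟩

variable [Fintype V]

lemma exists_minDomSet (G : SimpleGraph V) : ∃ D : Set V, IsMinDomSet G D := by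
  have hne : {n | ∃ S : Set V, IsDomSet G S ∧ S.ncard = n}.Nonempty :=
    ⟨(Set.univ : Set V).ncard, Set.univ, fun v hv => absurd (Set.mem_univ v) hv, rfl⟩
  obtain ⟨D, hD, hcard⟩ := Nat.sInf_mem hne
  exact ⟨D, hD, hcard⟩

lemma domNum_le (hD : IsDomSet G D) : domNum G ≤ D.ncard := Nat.sInf_le ⟨D, hD, rfl⟩

lemma totalDomNum_le (hT : IsTotalDomSet G T) : totalDomNum G ≤ T.ncard :=
  Nat.sInf_le ⟨T, hT, rfl⟩

lemma one_le_domNum (hD : IsMinDomSet G D) (hv : v ∈ D) : 1 ≤ domNum G := by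
  rw [← hD.2]
  exact (Set.ncard_pos (Set.toFinite D)).mpr ⟨v, hv⟩

end Basic
section Packing

variable [Fintype V] {G : SimpleGraph V} {D : Set V} {u v x : V}

set_option linter.unusedSectionVars false

/-- If `γₜ(G) = 2γ(G)` then every minimum dominating set is a packing. -/
theorem minDom_packing (hiso : NoIsolated G) (h : totalDomNum G = 2 * domNum G)
    (hD : IsMinDomSet G D) : IsPacking G D := by
  classical
  intro a ha b hb hab
  by_contra hdisj
  rw [Set.not_disjoint_iff] at hdisj
  obtain ⟨c, hca, hcb⟩ := hdisj
  set f : V → V := fun x => (hiso x).choose with hf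
  have hfadj : ∀ x : V, G.Adj x (f x) := fun x => (hiso x).choose_spec
  have h1γ : 1 ≤ domNum G := one_le_domNum hD ha
  -- build a small total dominating set
  have key : ∀ g : V → V, (∀ d ∈ D, d ≠ a → G.Adj d (g d)) → (∃ t, G.Adj t a ∧
      (t ∈ D ∨ ∃ d ∈ D \ {a}, g d = t)) → False := by
    intro g hg ⟨t, hta, htmem⟩
    set T : Set V := D ∪ (g '' (D \ {a})) with hT
    have htot : IsTotalDomSet G T := by
      intro x
      obtain ⟨d, hd, hxd⟩ := hD.1.covers x
      by_cases hxd' : x = d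
      · subst hxd'
        by_cases hxa : x = a
        · subst hxa
          refine ⟨t, ?_, hta⟩
          rcases htmem with ht | ⟨d', hd', hgd'⟩
          · exact Or.inl ht
          · exact Or.inr ⟨d', hd', hgd'⟩
        · exact ⟨g x, Or.inr ⟨x, ⟨hd, hxa⟩, rfl⟩, (hg x hd hxa).symm⟩
      · exact ⟨d, Or.inl hd, adj_of_mem_cnbr hxd hxd'⟩
    have hle : totalDomNum G ≤ T.ncard := totalDomNum_le htot
    have hcard : T.ncard ≤ D.ncard + (D \ {a}).ncard := by
      refine le_trans (Set.ncard_union_le _ _) ?_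
      exact Nat.add_le_add_left (Set.ncard_image_le (Set.toFinite _)) _
    have hda : (D \ {a}).ncard = D.ncard - 1 := Set.ncard_diff_singleton_of_mem ha
    rw [hD.2] at hcard hda
    omega
  by_cases hadj : G.Adj a b
  · exact key f (fun d _ _ => hfadj d) ⟨b, hadj.symm, Or.inl hb⟩
  · have hc_ne_a : c ≠ a := by
      rintro rfl
      rcases mem_cnbr.mp hcb with rfl | hbc
      · exact hab rfl
      · exact hadj hbc.symm
    have hc_ne_b : c ≠ b := by
      rintro rfl
      rcases mem_cnbr.mp hca with rfl | hac
      · exact hab rfl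
      · exact hadj hac
    have hac : G.Adj a c := adj_of_mem_cnbr hca hc_ne_a
    have hbc : G.Adj b c := adj_of_mem_cnbr hcb hc_ne_b
    refine key (Function.update f b c) (fun d hd hda => ?_) ⟨c, hac.symm, Or.inr ⟨b, ⟨hb, ?_⟩, ?_⟩⟩
    · by_cases hdb : d = b
      · subst hdb; rw [Function.update_self]; exact hbc
      · rw [Function.update_of_ne hdb]; exact hfadj d
    · exact fun hba => hab hba.symm
    · simp

/-- Two members of a packing dominating a common vertex are equal. -/
lemma cell_eq (hP : IsPacking G D) {d1 d2 : V} (hd1 : d1 ∈ D) (hd2 : d2 ∈ D)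
    (h1 : x ∈ cnbr G d1) (h2 : x ∈ cnbr G d2) : d1 = d2 := by
  by_contra hne
  exact Set.disjoint_left.mp (hP hd1 hd2 hne) h1 h2

/-- Members of a cell are not adjacent to other centers. -/
lemma not_adj_center (hP : IsPacking G D) {e : V} (hv : v ∈ D) (he : e ∈ D) (hne : e ≠ v)
    (hx : x ∈ cnbr G v) : ¬ G.Adj e x := fun hadj =>
  hne (cell_eq hP he hv (mem_cnbr_of_adj hadj) hx)

/-- Replacement lemma: replacing `v ∈ D` by a vertex whose closed neighborhood contains
`N[v]` yields again a minimum dominating set. -/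
theorem replace (hD : IsMinDomSet G D) (hv : v ∈ D) (hsub : cnbr G v ⊆ cnbr G u) :
    IsMinDomSet G (insert u (D \ {v})) := by
  have hdom : IsDomSet G (insert u (D \ {v})) := by
    intro x hx
    obtain ⟨d, hd, hxd⟩ := hD.1.covers x
    by_cases hdv : d = v
    · subst hdv
      have hxu : x ∈ cnbr G u := hsub hxd
      have hxu' : x ≠ u := fun hh => hx (by rw [hh]; exact Set.mem_insert u _)
      exact ⟨u, Set.mem_insert u _, adj_of_mem_cnbr hxu hxu'⟩
    · have hxd' : x ≠ d := fun hh =>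
        hx (Set.mem_insert_of_mem _ ⟨hh ▸ hd, by simpa [hh] using hdv⟩)
      exact ⟨d, Set.mem_insert_of_mem _ ⟨hd, hdv⟩, adj_of_mem_cnbr hxd hxd'⟩
  have hle : (insert u (D \ {v})).ncard ≤ domNum G := by
    have h1 : (insert u (D \ {v})).ncard ≤ (D \ {v}).ncard + 1 :=
      Set.ncard_insert_le _ _
    have h2 : (D \ {v}).ncard = D.ncard - 1 := Set.ncard_diff_singleton_of_mem hv
    have h3 : 1 ≤ D.ncard := (Set.ncard_pos (Set.toFinite D)).mpr ⟨v, hv⟩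
    rw [hD.2] at h2 h3
    omega
  exact ⟨hdom, le_antisymm hle (domNum_le hdom)⟩

/-- If `v ∈ D` and `N[v] ⊆ N[u]` for `u ≠ v`, then `u` is a true twin of `v`. -/
theorem twin_of_sub (hiso : NoIsolated G) (h : totalDomNum G = 2 * domNum G)
    (hD : IsMinDomSet G D) (hv : v ∈ D) (huv : u ≠ v) (hsub : cnbr G v ⊆ cnbr G u) :
    cnbr G u = cnbr G v := by
  have hP := minDom_packing hiso h hD
  have huD : u ∉ D := by
    intro huD
    exact huv (cell_eq hP huD hv (hsub (self_mem_cnbr G v)) (self_mem_cnbr G v))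
  have hD' := replace hD hv hsub
  have hP' := minDom_packing hiso h hD'
  refine Set.Subset.antisymm ?_ hsub
  intro w hw
  by_contra hwv
  have huv' : u ∈ cnbr G v := cnbr_comm.mp (hsub (self_mem_cnbr G v))
  have hwu : w ≠ u := fun hh => hwv (hh ▸ huv')
  obtain ⟨a, haD, hwa⟩ := hD.1.covers w
  have hav : a ≠ v := fun hh => hwv (by
    rcases mem_cnbr.mp hwa with rfl | hadj
    · exact hh ▸ self_mem_cnbr G v
    · exact hh ▸ mem_cnbr_of_adj hadj)
  have hua : u ≠ a := fun hh => huD (hh ▸ haD)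
  exact Set.disjoint_left.mp
    (hP' (Set.mem_insert u _) (Set.mem_insert_of_mem _ ⟨haD, hav⟩) hua) hw hwa

end Packing
section SpecialDom

variable [Fintype V] {G : SimpleGraph V} {D : Set V} {u v x : V}

set_option linter.unusedSectionVars false

/-- In any minimum dominating set, the vertex dominating a special vertex is a true twin
of it. -/
theorem special_dominator (hiso : NoIsolated G) (h : totalDomNum G = 2 * domNum G)
    (hD : IsMinDomSet G D) (hv : Special G v) {d : V} (hd : d ∈ D) (hvd : v ∈ cnbr G d) :
    cnbr G d = cnbr G v := by
  have hP := minDom_packing hiso h hD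
  by_cases hdv : d = v
  · rw [hdv]
  · have hadj : G.Adj d v := adj_of_mem_cnbr hvd (fun hh => hdv hh.symm)
    by_cases hM : ∃ w, G.Adj d w ∧ w ∉ cnbr G v
    · -- d ∈ M(v), and D(v) ⊆ N(d): contradiction with speciality
      exfalso
      apply hv.2
      refine ⟨d, ⟨hadj.symm, hM⟩, ?_⟩
      intro y hy
      obtain ⟨hyv, hyne, hysub⟩ := hy
      obtain ⟨a, haD, hya⟩ := hD.1.covers y
      have hay : a ∈ cnbr G y := cnbr_comm.mp hya
      have hav : v ∈ cnbr G a := cnbr_comm.mp (hysub hay)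
      have had : a = d := cell_eq hP haD hd hav hvd
      subst had
      have hyd : y ≠ a := by
        rintro rfl
        obtain ⟨w, hw, hwn⟩ := hM
        exact hwn (hysub (mem_cnbr_of_adj hw))
      rw [SimpleGraph.mem_neighborSet]
      exact adj_of_mem_cnbr hya hyd
    · -- N[d] ⊆ N[v], so d is a twin of v
      push_neg at hM
      have hsub : cnbr G d ⊆ cnbr G v := by
        intro w hw
        rcases mem_cnbr.mp hw with rfl | hadj'
        · exact cnbr_comm.mp hvd
        · exact hM w hadj'
      exact (twin_of_sub hiso h hD hd (fun hh => hdv hh.symm) hsub).symm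

/-- A minimum dominating set contains at most one member of each twin class. -/
lemma twin_unique_in_minDom (hiso : NoIsolated G) (h : totalDomNum G = 2 * domNum G)
    (hD : IsMinDomSet G D) {d1 d2 : V} (hd1 : d1 ∈ D) (hd2 : d2 ∈ D)
    (h1 : cnbr G d1 = cnbr G d2) : d1 = d2 := by
  have hP := minDom_packing hiso h hD
  exact cell_eq hP hd1 hd2 (self_mem_cnbr G d1) (h1 ▸ self_mem_cnbr G d1)

end SpecialDom
section Forbidden

variable {G : SimpleGraph V}

lemma H1_adj_iff (i j : Fin 6) :
    H1.Adj i j ↔ (cycleGraph 6).Adj i j ∨ (s(i,j) = s(0,2) ∧ i ≠ j) := by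
  simp [H1, fromEdgeSet_adj]

lemma H2_adj_iff (i j : Fin 6) :
    H2.Adj i j ↔ (cycleGraph 6).Adj i j ∨ ((s(i,j) = s(1,5) ∨ s(i,j) = s(2,4)) ∧ i ≠ j) := by
  simp [H2, fromEdgeSet_adj]

instance : DecidableRel H1.Adj := fun i j => decidable_of_iff _ (H1_adj_iff i j).symm
instance : DecidableRel H2.Adj := fun i j => decidable_of_iff _ (H2_adj_iff i j).symm

set_option maxHeartbeats 3200000 in
/-- If `G` is `(H₁, H₂, C₆)`-free, it contains no six vertices arranged in a cycle whose
only possible chords are between positions `1,5` and `2,4`. -/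
theorem forbidden6 (hH1 : Free H1 G) (hH2 : Free H2 G)
    (hC6 : Free (cycleGraph 6) G) (a0 a1 a2 a3 a4 a5 : V)
    (e01 : G.Adj a0 a1) (e12 : G.Adj a1 a2) (e23 : G.Adj a2 a3) (e34 : G.Adj a3 a4)
    (e45 : G.Adj a4 a5) (e50 : G.Adj a5 a0)
    (n02 : ¬G.Adj a0 a2) (n03 : ¬G.Adj a0 a3) (n04 : ¬G.Adj a0 a4)
    (n13 : ¬G.Adj a1 a3) (n14 : ¬G.Adj a1 a4) (n25 : ¬G.Adj a2 a5)
    (n35 : ¬G.Adj a3 a5) : False := by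
  have d02 : a0 ≠ a2 := by intro hh; rw [hh] at n03; exact n03 e23
  have d03 : a0 ≠ a3 := by intro hh; rw [hh] at n04; exact n04 e34
  have d04 : a0 ≠ a4 := by intro hh; rw [hh] at n03; exact n03 e34.symm
  have d13 : a1 ≠ a3 := by intro hh; rw [hh] at n14; exact n14 e34
  have d14 : a1 ≠ a4 := by intro hh; rw [hh] at n13; exact n13 e34.symm
  have d15 : a1 ≠ a5 := by intro hh; rw [hh] at n14; exact n14 e45.symm
  have d24 : a2 ≠ a4 := by intro hh; rw [hh] at n25; exact n25 e45
  have d25 : a2 ≠ a5 := by intro hh; rw [hh] at n02; exact n02 e50.symm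
  have d35 : a3 ≠ a5 := by intro hh; rw [hh] at n03; exact n03 e50.symm
  by_cases c15 : G.Adj a1 a5 <;> by_cases c24 : G.Adj a2 a4
  · refine hH2.false ⟨⟨fun i => match i with
      | 0 => a0 | 1 => a1 | 2 => a2 | 3 => a3 | 4 => a4 | 5 => a5, ?_⟩, ?_⟩
    · intro i j hij
      fin_cases i <;> fin_cases j <;>
        first
          | rfl
          | (exfalso; revert hij; first
              | exact fun hh => e01.ne hh | exact fun hh => e01.ne hh.symm
              | exact fun hh => e12.ne hh | exact fun hh => e12.ne hh.symm
              | exact fun hh => e23.ne hh | exact fun hh => e23.ne hh.symm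
              | exact fun hh => e34.ne hh | exact fun hh => e34.ne hh.symm
              | exact fun hh => e45.ne hh | exact fun hh => e45.ne hh.symm
              | exact fun hh => e50.ne' hh | exact fun hh => e50.ne' hh.symm
              | exact fun hh => d02 hh | exact fun hh => d02 hh.symm
              | exact fun hh => d03 hh | exact fun hh => d03 hh.symm
              | exact fun hh => d04 hh | exact fun hh => d04 hh.symm
              | exact fun hh => d13 hh | exact fun hh => d13 hh.symm
              | exact fun hh => d14 hh | exact fun hh => d14 hh.symm
              | exact fun hh => d15 hh | exact fun hh => d15 hh.symm
              | exact fun hh => d24 hh | exact fun hh => d24 hh.symm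
              | exact fun hh => d25 hh | exact fun hh => d25 hh.symm
              | exact fun hh => d35 hh | exact fun hh => d35 hh.symm)
    · intro a b
      fin_cases a <;> fin_cases b <;>
        first
          | (exact iff_of_true (by first
              | exact e01 | exact e01.symm | exact e12 | exact e12.symm
              | exact e23 | exact e23.symm | exact e34 | exact e34.symm
              | exact e45 | exact e45.symm | exact e50 | exact e50.symm
              | exact c15 | exact c15.symm | exact c24 | exact c24.symm) (by decide))
          | (exact iff_of_false (by intro hh; first
              | exact G.irrefl hh
              | exact n02 hh | exact n02 hh.symm | exact n03 hh | exact n03 hh.symm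
              | exact n04 hh | exact n04 hh.symm | exact n13 hh | exact n13 hh.symm
              | exact n14 hh | exact n14 hh.symm | exact n25 hh | exact n25 hh.symm
              | exact n35 hh | exact n35 hh.symm) (by decide))
  · refine hH1.false ⟨⟨fun i => match i with
      | 0 => a5 | 1 => a0 | 2 => a1 | 3 => a2 | 4 => a3 | 5 => a4, ?_⟩, ?_⟩
    · intro i j hij
      fin_cases i <;> fin_cases j <;>
        first
          | rfl
          | (exfalso; revert hij; first
              | exact fun hh => e01.ne hh | exact fun hh => e01.ne hh.symm
              | exact fun hh => e12.ne hh | exact fun hh => e12.ne hh.symm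
              | exact fun hh => e23.ne hh | exact fun hh => e23.ne hh.symm
              | exact fun hh => e34.ne hh | exact fun hh => e34.ne hh.symm
              | exact fun hh => e45.ne hh | exact fun hh => e45.ne hh.symm
              | exact fun hh => e50.ne' hh | exact fun hh => e50.ne' hh.symm
              | exact fun hh => d02 hh | exact fun hh => d02 hh.symm
              | exact fun hh => d03 hh | exact fun hh => d03 hh.symm
              | exact fun hh => d04 hh | exact fun hh => d04 hh.symm
              | exact fun hh => d13 hh | exact fun hh => d13 hh.symm
              | exact fun hh => d14 hh | exact fun hh => d14 hh.symm
              | exact fun hh => d15 hh | exact fun hh => d15 hh.symm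
              | exact fun hh => d24 hh | exact fun hh => d24 hh.symm
              | exact fun hh => d25 hh | exact fun hh => d25 hh.symm
              | exact fun hh => d35 hh | exact fun hh => d35 hh.symm)
    · intro a b
      fin_cases a <;> fin_cases b <;>
        first
          | (exact iff_of_true (by first
              | exact e01 | exact e01.symm | exact e12 | exact e12.symm
              | exact e23 | exact e23.symm | exact e34 | exact e34.symm
              | exact e45 | exact e45.symm | exact e50 | exact e50.symm
              | exact c15 | exact c15.symm) (by decide))
          | (exact iff_of_false (by intro hh; first
              | exact G.irrefl hh
              | exact n02 hh | exact n02 hh.symm | exact n03 hh | exact n03 hh.symm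
              | exact n04 hh | exact n04 hh.symm | exact n13 hh | exact n13 hh.symm
              | exact n14 hh | exact n14 hh.symm | exact n25 hh | exact n25 hh.symm
              | exact n35 hh | exact n35 hh.symm | exact c24 hh | exact c24 hh.symm) (by decide))
  · refine hH1.false ⟨⟨fun i => match i with
      | 0 => a2 | 1 => a3 | 2 => a4 | 3 => a5 | 4 => a0 | 5 => a1, ?_⟩, ?_⟩
    · intro i j hij
      fin_cases i <;> fin_cases j <;>
        first
          | rfl
          | (exfalso; revert hij; first
              | exact fun hh => e01.ne hh | exact fun hh => e01.ne hh.symm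
              | exact fun hh => e12.ne hh | exact fun hh => e12.ne hh.symm
              | exact fun hh => e23.ne hh | exact fun hh => e23.ne hh.symm
              | exact fun hh => e34.ne hh | exact fun hh => e34.ne hh.symm
              | exact fun hh => e45.ne hh | exact fun hh => e45.ne hh.symm
              | exact fun hh => e50.ne' hh | exact fun hh => e50.ne' hh.symm
              | exact fun hh => d02 hh | exact fun hh => d02 hh.symm
              | exact fun hh => d03 hh | exact fun hh => d03 hh.symm
              | exact fun hh => d04 hh | exact fun hh => d04 hh.symm
              | exact fun hh => d13 hh | exact fun hh => d13 hh.symm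
              | exact fun hh => d14 hh | exact fun hh => d14 hh.symm
              | exact fun hh => d15 hh | exact fun hh => d15 hh.symm
              | exact fun hh => d24 hh | exact fun hh => d24 hh.symm
              | exact fun hh => d25 hh | exact fun hh => d25 hh.symm
              | exact fun hh => d35 hh | exact fun hh => d35 hh.symm)
    · intro a b
      fin_cases a <;> fin_cases b <;>
        first
          | (exact iff_of_true (by first
              | exact e01 | exact e01.symm | exact e12 | exact e12.symm
              | exact e23 | exact e23.symm | exact e34 | exact e34.symm
              | exact e45 | exact e45.symm | exact e50 | exact e50.symm
              | exact c24 | exact c24.symm) (by decide))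
          | (exact iff_of_false (by intro hh; first
              | exact G.irrefl hh
              | exact n02 hh | exact n02 hh.symm | exact n03 hh | exact n03 hh.symm
              | exact n04 hh | exact n04 hh.symm | exact n13 hh | exact n13 hh.symm
              | exact n14 hh | exact n14 hh.symm | exact n25 hh | exact n25 hh.symm
              | exact n35 hh | exact n35 hh.symm | exact c15 hh | exact c15 hh.symm) (by decide))
  · refine hC6.false ⟨⟨fun i => match i with
      | 0 => a0 | 1 => a1 | 2 => a2 | 3 => a3 | 4 => a4 | 5 => a5, ?_⟩, ?_⟩
    · intro i j hij
      fin_cases i <;> fin_cases j <;>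
        first
          | rfl
          | (exfalso; revert hij; first
              | exact fun hh => e01.ne hh | exact fun hh => e01.ne hh.symm
              | exact fun hh => e12.ne hh | exact fun hh => e12.ne hh.symm
              | exact fun hh => e23.ne hh | exact fun hh => e23.ne hh.symm
              | exact fun hh => e34.ne hh | exact fun hh => e34.ne hh.symm
              | exact fun hh => e45.ne hh | exact fun hh => e45.ne hh.symm
              | exact fun hh => e50.ne' hh | exact fun hh => e50.ne' hh.symm
              | exact fun hh => d02 hh | exact fun hh => d02 hh.symm
              | exact fun hh => d03 hh | exact fun hh => d03 hh.symm
              | exact fun hh => d04 hh | exact fun hh => d04 hh.symm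
              | exact fun hh => d13 hh | exact fun hh => d13 hh.symm
              | exact fun hh => d14 hh | exact fun hh => d14 hh.symm
              | exact fun hh => d15 hh | exact fun hh => d15 hh.symm
              | exact fun hh => d24 hh | exact fun hh => d24 hh.symm
              | exact fun hh => d25 hh | exact fun hh => d25 hh.symm
              | exact fun hh => d35 hh | exact fun hh => d35 hh.symm)
    · intro a b
      fin_cases a <;> fin_cases b <;>
        first
          | (exact iff_of_true (by first
              | exact e01 | exact e01.symm | exact e12 | exact e12.symm
              | exact e23 | exact e23.symm | exact e34 | exact e34.symm
              | exact e45 | exact e45.symm | exact e50 | exact e50.symm) (by decide))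
          | (exact iff_of_false (by intro hh; first
              | exact G.irrefl hh
              | exact n02 hh | exact n02 hh.symm | exact n03 hh | exact n03 hh.symm
              | exact n04 hh | exact n04 hh.symm | exact n13 hh | exact n13 hh.symm
              | exact n14 hh | exact n14 hh.symm | exact n25 hh | exact n25 hh.symm
              | exact n35 hh | exact n35 hh.symm | exact c15 hh | exact c15 hh.symm
              | exact c24 hh | exact c24 hh.symm) (by decide))

end Forbidden
section SpecialMain

variable [Fintype V] {G : SimpleGraph V} {D : Set V} {u v x : V}

set_option linter.unusedSectionVars false

/-- Every vertex of a minimum dominating set is special. -/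
theorem minDom_special (hiso : NoIsolated G) (hH1 : Free H1 G) (hH2 : Free H2 G)
    (hC6 : Free (cycleGraph 6) G) (h : totalDomNum G = 2 * domNum G)
    (hD : IsMinDomSet G D) (hv : v ∈ D) : Special G v := by
  classical
  have hP := minDom_packing hiso h hD
  constructor
  · obtain ⟨u, hu⟩ := hiso v
    exact ⟨u, hu⟩
  rintro ⟨u, hu, hDu⟩
  obtain ⟨huv, w0, hw0, hw0n⟩ := id hu
  -- pairwise compatibility of customers of a cell, via forbidden subgraphs
  have key : ∀ e ∈ D, e ≠ v → ∀ z1 z2 y1 y2 : V, z1 ∈ Mset G v → z2 ∈ Mset G v →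
      z1 ≠ z2 → G.Adj z1 y1 → y1 ∉ cnbr G v → G.Adj e y1 → G.Adj z2 y2 → y2 ∉ cnbr G v →
      G.Adj e y2 → y1 ≠ y2 → ¬G.Adj z1 y2 → ¬G.Adj z2 y1 → False := by
    intro e heD hev z1 z2 y1 y2 hz1 hz2 hz12 hzy1 hy1n hey1 hzy2 hy2n hey2 hy12 hn1 hn2
    have hz1v : z1 ∈ cnbr G v := mem_cnbr_of_adj hz1.1
    have hz2v : z2 ∈ cnbr G v := mem_cnbr_of_adj hz2.1
    refine forbidden6 hH1 hH2 hC6 v z1 y1 e y2 z2 hz1.1 hzy1 hey1.symm hey2 hzy2.symm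
      hz2.1.symm ?_ ?_ ?_ ?_ ?_ ?_ ?_
    · exact fun hh => (not_mem_cnbr hy1n).2 hh
    · exact fun hh => (not_adj_center hP hv heD hev (self_mem_cnbr G v)) hh.symm
    · exact fun hh => (not_mem_cnbr hy2n).2 hh
    · exact fun hh => (not_adj_center hP hv heD hev hz1v) hh.symm
    · exact hn1
    · exact fun hh => hn2 hh.symm
    · exact not_adj_center hP hv heD hev hz2v
  -- Helly property per cell
  have helly : ∀ e ∈ D, e ≠ v → ∃ y : V, G.Adj e y ∧
      ∀ z ∈ Mset G v, (∃ y', G.Adj e y' ∧ y' ∉ cnbr G v ∧ G.Adj z y') → G.Adj z y := by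
    intro e heD hev
    set C : Set V := {z | z ∈ Mset G v ∧ ∃ y', G.Adj e y' ∧ y' ∉ cnbr G v ∧ G.Adj z y'}
      with hC
    by_cases hCne : C.Nonempty
    · set A : Set V := {y | G.Adj e y ∧ y ∉ cnbr G v} with hA
      have hAne : A.Nonempty := by
        obtain ⟨z, hz⟩ := hCne
        obtain ⟨y', h1, h2, h3⟩ := hz.2
        exact ⟨y', h1, h2⟩
      obtain ⟨y0, hy0A, hy0max⟩ := Set.Finite.exists_maximalFor
        (fun y => {z' ∈ C | G.Adj z' y}.ncard) A (Set.toFinite A) hAne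
      refine ⟨y0, hy0A.1, ?_⟩
      intro z hzM hzw
      by_contra hzy0
      obtain ⟨y', hy'e, hy'n, hzy'⟩ := hzw
      have hy'A : y' ∈ A := ⟨hy'e, hy'n⟩
      have hzC : z ∈ C := ⟨hzM, y', hy'e, hy'n, hzy'⟩
      have hsub : {z' ∈ C | G.Adj z' y0} ⊂ {z' ∈ C | G.Adj z' y'} := by
        constructor
        · intro z' hz'
          refine ⟨hz'.1, ?_⟩
          by_contra hz'y'
          have hz'z : z' ≠ z := by
            rintro rfl
            exact hz'y' hzy'
          exact key e heD hev z z' y' y0 hzM hz'.1.1 (fun hh => hz'z hh.symm) hzy' hy'n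
            hy'e hz'.2 hy0A.2 hy0A.1 (by rintro rfl; exact hzy0 hzy') hzy0 hz'y'
        · intro hsup
          exact hzy0 (hsup ⟨hzC, hzy'⟩).2
      have hlt := Set.ncard_lt_ncard hsub (Set.toFinite _)
      have : {z' ∈ C | G.Adj z' y'}.ncard ≤ {z' ∈ C | G.Adj z' y0}.ncard :=
        hy0max (j := y') hy'A (le_of_lt hlt)
      omega
    · obtain ⟨y, hy⟩ := hiso e
      refine ⟨y, hy, ?_⟩
      intro z hzM hzw
      exact absurd (⟨hzM, hzw⟩ : z ∈ C) (fun hc => hCne ⟨z, hc⟩)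
  -- choose the common neighbors
  set g : V → V := fun e =>
    if hgood : ∃ y : V, G.Adj e y ∧
        ∀ z ∈ Mset G v, (∃ y', G.Adj e y' ∧ y' ∉ cnbr G v ∧ G.Adj z y') → G.Adj z y
    then hgood.choose else e with hg
  have hgspec : ∀ e ∈ D, e ≠ v → G.Adj e (g e) ∧
      ∀ z ∈ Mset G v, (∃ y', G.Adj e y' ∧ y' ∉ cnbr G v ∧ G.Adj z y') → G.Adj z (g e) := by
    intro e heD hev
    have hgood := helly e heD hev
    rw [hg]
    simp only [dif_pos hgood]
    exact hgood.choose_spec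
  -- the small total dominating set
  set T : Set V := ((D \ {v}) ∪ (g '' (D \ {v}))) ∪ {u} with hT
  have htot : IsTotalDomSet G T := by
    intro x
    by_cases hx : x ∈ cnbr G v
    · by_cases hux : G.Adj u x
      · exact ⟨u, Or.inr rfl, hux⟩
      · by_cases hxv : x = v
        · exact ⟨u, Or.inr rfl, hxv ▸ huv.symm⟩
        · have hvx : G.Adj v x := adj_of_mem_cnbr hx hxv
          by_cases hM : x ∈ Mset G v
          · obtain ⟨-, y, hxy, hyn⟩ := id hM
            obtain ⟨a, haD, hya⟩ := hD.1.covers y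
            have hav : a ≠ v := by
              rintro rfl
              exact hyn hya
            have hya' : y ≠ a := by
              rintro rfl
              exact hav (cell_eq hP haD hv (mem_cnbr_of_adj hxy.symm) hx)
            have hay : G.Adj a y := adj_of_mem_cnbr hya hya'
            refine ⟨g a, Or.inl (Or.inr ⟨a, ⟨haD, hav⟩, rfl⟩), ?_⟩
            exact ((hgspec a haD hav).2 x hM ⟨y, hay, hyn, hxy⟩).symm
          · have hno : ∀ y, G.Adj x y → y ∈ cnbr G v := by
              intro y hy
              by_contra hyn
              exact hM ⟨hvx, y, hy, hyn⟩
            by_cases heq : cnbr G x = cnbr G v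
            · have hux' : u ∈ cnbr G x := by
                rw [heq]
                exact mem_cnbr_of_adj huv
              have hune : u ≠ x := by
                rintro rfl
                exact hM hu
              exact absurd (adj_of_mem_cnbr hux' hune).symm hux
            · have hsub : cnbr G x ⊆ cnbr G v := by
                intro y hy
                rcases mem_cnbr.mp hy with rfl | hadj
                · exact hx
                · exact hno y hadj
              exact absurd (hDu ⟨hvx, heq, hsub⟩ : x ∈ G.neighborSet u) hux
    · obtain ⟨a, haD, hxa⟩ := hD.1.covers x
      have hav : a ≠ v := by
        rintro rfl
        exact hx hxa
      by_cases hxa' : x = a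
      · exact ⟨g a, Or.inl (Or.inr ⟨a, ⟨haD, hav⟩, rfl⟩), hxa' ▸ ((hgspec a haD hav).1).symm⟩
      · exact ⟨a, Or.inl (Or.inl ⟨haD, hav⟩), adj_of_mem_cnbr hxa hxa'⟩
  -- size contradiction
  have hle := totalDomNum_le htot
  have h1 : T.ncard ≤ ((D \ {v}) ∪ (g '' (D \ {v}))).ncard + 1 := by
    refine le_trans (Set.ncard_union_le _ _) ?_
    simp [Set.ncard_singleton]
  have h2 : ((D \ {v}) ∪ (g '' (D \ {v}))).ncard ≤ (D \ {v}).ncard + (D \ {v}).ncard := by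
    refine le_trans (Set.ncard_union_le _ _) ?_
    exact Nat.add_le_add_left (Set.ncard_image_le (Set.toFinite _)) _
  have h3 : (D \ {v}).ncard = D.ncard - 1 := Set.ncard_diff_singleton_of_mem hv
  have h4 : 1 ≤ domNum G := one_le_domNum hD hv
  rw [hD.2] at h3
  omega

end SpecialMain
set_option linter.unusedSectionVars false in
/-- In an `(H₁,H₂,C₆)`-free graph `G` with no isolated vertices satisfying `γₜ(G) = 2γ(G)`,
the number of minimum dominating sets equals `∏_{v ∈ S} |T(v)|` for an `S(G)`-set `S`. -/
theorem stmt8 {V : Type*} [Fintype V] (G : SimpleGraph V) (hiso : NoIsolated G)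
    (hH1 : Free H1 G) (hH2 : Free H2 G) (hC6 : Free (cycleGraph 6) G)
    (h : totalDomNum G = 2 * domNum G)
    (S : Finset V) (hS : IsSGSet G ↑S) :
    Nat.card {D : Set V // IsMinDomSet G D} = ∏ v ∈ S, (Tset G v).ncard := by
  classical
  obtain ⟨D0, hD0⟩ := exists_minDomSet G
  have hspecial : ∀ s ∈ S, Special G s := fun s hs => hS.1 s (Finset.mem_coe.mpr hs)
  have srep : ∀ d : V, Special G d → ∃ s ∈ S, cnbr G s = cnbr G d := by
    intro d hd
    obtain ⟨s, ⟨hsS, hsT⟩, -⟩ := hS.2 d hd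
    exact ⟨s, Finset.mem_coe.mp hsS, hsT⟩
  have suniq : ∀ s1 s2 : V, s1 ∈ S → s2 ∈ S → cnbr G s1 = cnbr G s2 → s1 = s2 := by
    intro s1 s2 h1 h2 he
    obtain ⟨s, -, huniq⟩ := hS.2 s2 (hspecial s2 h2)
    have e1 : s1 = s := huniq s1 ⟨Finset.mem_coe.mpr h1, he⟩
    have e2 : s2 = s := huniq s2 ⟨Finset.mem_coe.mpr h2, rfl⟩
    exact e1.trans e2.symm
  have cellof : ∀ D : Set V, IsMinDomSet G D → ∀ s ∈ S, ∃ d ∈ D, cnbr G d = cnbr G s := by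
    intro D hD s hs
    obtain ⟨d, hd, hsd⟩ := hD.1.covers s
    exact ⟨d, hd, special_dominator hiso h hD (hspecial s hs) hd hsd⟩
  set I := {x : V // x ∈ S} with hI
  set F : (∀ i : I, {y : V // y ∈ Tset G (i : V)}) → Set V :=
    fun c => Set.range (fun i : I => ((c i : V))) with hF
  have hmemT : ∀ (c : ∀ i : I, {y : V // y ∈ Tset G (i : V)}) (i : I),
      cnbr G ((c i : V)) = cnbr G (i : V) := fun c i => (c i).2
  have hinjval : ∀ c : ∀ i : I, {y : V // y ∈ Tset G (i : V)},
      Function.Injective (fun i : I => ((c i : V))) := by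
    intro c i j he
    apply Subtype.ext
    apply suniq _ _ i.2 j.2
    rw [← hmemT c i, ← hmemT c j]
    exact congrArg (cnbr G) he
  have hdomF : ∀ c, IsDomSet G (F c) := by
    intro c x hx
    obtain ⟨d, hd, hxd⟩ := hD0.1.covers x
    obtain ⟨s, hs, hsd⟩ := srep d (minDom_special hiso hH1 hH2 hC6 h hD0 hd)
    set i : I := ⟨s, hs⟩ with hi
    have hxc : x ∈ cnbr G ((c i : V)) := by
      rw [hmemT c i]
      exact (show cnbr G s = cnbr G d from hsd) ▸ hxd
    have hxne : x ≠ (c i : V) := by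
      rintro rfl
      exact hx ⟨i, rfl⟩
    exact ⟨(c i : V), ⟨i, rfl⟩, adj_of_mem_cnbr hxc hxne⟩
  have hcardF : ∀ c, (F c).ncard = S.card := by
    intro c
    rw [← Nat.card_coe_set_eq]
    rw [← Nat.card_congr (Equiv.ofInjective _ (hinjval c))]
    rw [Nat.card_eq_fintype_card]
    exact Fintype.card_coe S
  have hFeq : ∀ D : Set V, IsMinDomSet G D →
      ∃ c, F c = D := by
    intro D hD
    have hc : ∀ i : I, ((cellof D hD (i : V) i.2).choose) ∈ Tset G (i : V) :=
      fun i => (cellof D hD (i : V) i.2).choose_spec.2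
    set c : ∀ i : I, {y : V // y ∈ Tset G (i : V)} :=
      fun i => ⟨(cellof D hD (i : V) i.2).choose, hc i⟩ with hcdef
    refine ⟨c, ?_⟩
    have hcD : ∀ i : I, ((c i : V)) ∈ D := fun i => (cellof D hD (i : V) i.2).choose_spec.1
    apply Set.Subset.antisymm
    · rintro x ⟨i, rfl⟩
      exact hcD i
    · intro d hd
      obtain ⟨s, hs, hsd⟩ := srep d (minDom_special hiso hH1 hH2 hC6 h hD hd)
      set i : I := ⟨s, hs⟩ with hi
      have : (c i : V) = d := by
        apply twin_unique_in_minDom hiso h hD (hcD i) hd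
        rw [(hc i : cnbr G ((c i : V)) = cnbr G s)]
        exact hsd
      exact ⟨i, this⟩
  have hγ : domNum G = S.card := by
    obtain ⟨c0, hc0⟩ := hFeq D0 hD0
    rw [← hD0.2, ← hc0, hcardF c0]
  have hmin : ∀ c, IsMinDomSet G (F c) := fun c =>
    ⟨hdomF c, (hcardF c).trans hγ.symm⟩
  set Φ : (∀ i : I, {y : V // y ∈ Tset G (i : V)}) → {D : Set V // IsMinDomSet G D} :=
    fun c => ⟨F c, hmin c⟩ with hΦ
  have hbij : Function.Bijective Φ := by
    constructor
    · intro c c' he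
      have heq : F c = F c' := congrArg Subtype.val he
      funext i
      have hmem : ((c i : V)) ∈ F c' := heq ▸ ⟨i, rfl⟩
      obtain ⟨j, hj⟩ := hmem
      have hj' : ((c' j : V)) = ((c i : V)) := hj
      have hij : j = i := by
        apply Subtype.ext
        apply suniq _ _ j.2 i.2
        rw [← hmemT c' j, hj', hmemT c i]
      apply Subtype.ext
      rw [← hj', hij]
    · intro ⟨D, hD⟩
      obtain ⟨c, hc⟩ := hFeq D hD
      exact ⟨c, Subtype.ext hc⟩
  rw [← Nat.card_eq_of_bijective Φ hbij]
  rw [Nat.card_pi]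
  rw [← Finset.prod_coe_sort S (fun v => (Tset G v).ncard)]
  exact Finset.prod_congr rfl (fun i _ => Nat.card_coe_set_eq _)

end TotalDom
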